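/- Let f be a maximum integer skew-symmetric flow in a skew-symmetric graph G with symmetric capacities c and source s. Then the set R_f of nodes reachable from s by c_f-regular paths in the residual graph G_f is the same for all maximum integer skew-symmetric flows f. -/

import Mathlib

/-- A skew-symmetric graph: a digraph with a fixed-point-free involution
`sigV` on nodes and an involution `sigA` on arcs mapping an arc from `u` to
`v` to an arc from `sigV v` to `sigV u`. -/
structure SkewGraph (N : Type) where
  A : Type
  fintypeA : Fintype A
  tail : A → N
  head : A → N
  sigV : N → N
  sigA : A → A
  sigV_invol : Function.Involutive sigV
  sigV_ne : ∀ v, sigV v ≠ v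
  sigA_invol : Function.Involutive sigA
  tail_sigA : ∀ a, tail (sigA a) = sigV (head a)
  head_sigA : ∀ a, head (sigA a) = sigV (tail a)

attribute [instance] SkewGraph.fintypeA

namespace SkewGraph

variable {N : Type} (G : SkewGraph N)

open Classical in
/-- Divergence of `f` at `v`: outgoing minus incoming flow. -/
noncomputable def div (f : G.A → ℚ) (v : N) : ℚ :=
  (∑ a, if G.tail a = v then f a else 0)
    - ∑ a, if G.head a = v then f a else 0

/-- An integer skew-symmetric `s`–`s'` flow: a nonnegative, integral,
self-symmetric function with zero divergence away from `s` and `s' = σ(s)`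
and nonnegative divergence at `s`; its value is `G.div f s`. -/
def IsISKFlow (s : N) (f : G.A → ℚ) : Prop :=
  (∀ a, 0 ≤ f a) ∧ (∀ a, ∃ z : ℤ, f a = (z : ℚ)) ∧
    (∀ a, f (G.sigA a) = f a) ∧
    (∀ v, v ≠ s → v ≠ G.sigV s → G.div f v = 0) ∧ 0 ≤ G.div f s

/-- Feasibility with respect to arc capacities. -/
def FlowFeasible (c : G.A → ℕ) (f : G.A → ℚ) : Prop :=
  ∀ a, f a ≤ (c a : ℚ)

open Classical in
/-- `c(X,Y)` : total capacity of the arcs from `X` to `Y`. -/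
noncomputable def capFromTo (c : G.A → ℕ) (X Y : Set N) : ℕ :=
  ∑ a, if G.tail a ∈ X ∧ G.head a ∈ Y then c a else 0

/-- `c[X⃗]` : total capacity of the arcs leaving `X`. -/
noncomputable def capOut (c : G.A → ℕ) (X : Set N) : ℕ :=
  G.capFromTo c X Xᶜ

/-- A directed walk from `u` to `v`, given by its nonempty arc list. -/
def IsDiWalk (u v : N) (L : List G.A) : Prop :=
  L ≠ [] ∧ (∀ a ∈ L.head?, G.tail a = u) ∧ (∀ a ∈ L.getLast?, G.head a = v) ∧
    L.Chain' fun a b => G.head a = G.tail b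

open Classical in
/-- The residual skew-symmetric graph of a symmetric flow `f` with symmetric
capacities `c`: unsaturated arcs are kept and reversals of flow-carrying
arcs are added; the skew-symmetry is inherited. -/
noncomputable def residual (c : G.A → ℕ) (f : G.A → ℚ)
    (hc : ∀ a, c (G.sigA a) = c a) (hf : ∀ a, f (G.sigA a) = f a) :
    SkewGraph N where
  A := {a : G.A // f a < (c a : ℚ)} ⊕ {a : G.A // 0 < f a}
  fintypeA := by classical infer_instance
  tail := Sum.elim (fun a => G.tail a.1) fun a => G.head a.1
  head := Sum.elim (fun a => G.head a.1) fun a => G.tail a.1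
  sigV := G.sigV
  sigA := Sum.elim
    (fun a => Sum.inl ⟨G.sigA a.1, by rw [hf, hc]; exact a.2⟩)
    fun a => Sum.inr ⟨G.sigA a.1, by rw [hf]; exact a.2⟩
  sigV_invol := G.sigV_invol
  sigV_ne := G.sigV_ne
  sigA_invol := by
    rintro (a | a) <;> simp [G.sigA_invol a.1]
  tail_sigA := by
    rintro (a | a) <;> simp [G.tail_sigA, G.head_sigA]
  head_sigA := by
    rintro (a | a) <;> simp [G.tail_sigA, G.head_sigA]

/-- Residual capacities on the residual graph. -/
noncomputable def resCap (c : G.A → ℕ) (f : G.A → ℚ)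
    (hc : ∀ a, c (G.sigA a) = c a) (hf : ∀ a, f (G.sigA a) = f a) :
    (G.residual c f hc hf).A → ℚ :=
  Sum.elim (fun a => (c a.1 : ℚ) - f a.1) fun a => f a.1

/-- A `c_f`-regular path in the residual graph: an arc-simple `u`–`v` walk
such that every pair of mutually symmetric arcs occurring on it has residual
capacity at least `2` (and equal on both mates). -/
def IsRegularPath (c : G.A → ℕ) (f : G.A → ℚ)
    (hc : ∀ a, c (G.sigA a) = c a) (hf : ∀ a, f (G.sigA a) = f a)
    (u v : N) (L : List (G.residual c f hc hf).A) : Prop :=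
  (G.residual c f hc hf).IsDiWalk u v L ∧ L.Nodup ∧
    ∀ a ∈ L, (G.residual c f hc hf).sigA a ∈ L →
      G.resCap c f hc hf a = G.resCap c f hc hf ((G.residual c f hc hf).sigA a)
        ∧ 2 ≤ G.resCap c f hc hf a

end SkewGraph

/-- The set `R_f` of nodes reachable from the source `s` by `c_f`-regular
paths in the residual graph `G_f` (together with `s` itself). -/
def SkewGraph.reachSet {N : Type} (G : SkewGraph N) (s : N) (c : G.A → ℕ)
    (hc : ∀ a, c (G.sigA a) = c a) (f : G.A → ℚ)
    (hf : ∀ a, f (G.sigA a) = f a) : Set N :=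
  {v : N | v = s ∨ ∃ L, G.IsRegularPath c f hc hf s v L}

namespace SkewGraph

open Classical

variable {N : Type} (G : SkewGraph N)

lemma div_add (u w : G.A → ℚ) (y : N) :
    G.div (fun a => u a + w a) y = G.div u y + G.div w y := by
  classical
  unfold div
  have h1 : ∀ (t : G.A → N),
      (∑ a, if t a = y then u a + w a else 0)
        = (∑ a, if t a = y then u a else 0) + ∑ a, if t a = y then w a else 0 := by
    intro t
    rw [← Finset.sum_add_distrib]
    refine Finset.sum_congr rfl fun a _ => ?_
    split <;> simp
  rw [h1, h1]; ring

lemma div_sub (u w : G.A → ℚ) (y : N) :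
    G.div (fun a => u a - w a) y = G.div u y - G.div w y := by
  classical
  unfold div
  have h1 : ∀ (t : G.A → N),
      (∑ a, if t a = y then u a - w a else 0)
        = (∑ a, if t a = y then u a else 0) - ∑ a, if t a = y then w a else 0 := by
    intro t
    rw [← Finset.sum_sub_distrib]
    refine Finset.sum_congr rfl fun a _ => ?_
    split <;> simp
  rw [h1, h1]; ring

lemma div_single (a₁ : G.A) (y : N) :
    G.div (fun a => if a = a₁ then (1 : ℚ) else 0) y
      = (if G.tail a₁ = y then 1 else 0) - (if G.head a₁ = y then 1 else 0) := by
  classical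
  unfold div
  have h1 : ∀ (t : G.A → N),
      (∑ a, if t a = y then (if a = a₁ then (1:ℚ) else 0) else 0)
        = if t a₁ = y then 1 else 0 := by
    intro t
    have : ∀ a : G.A, (if t a = y then (if a = a₁ then (1:ℚ) else 0) else 0)
        = if a = a₁ then (if t a₁ = y then (1:ℚ) else 0) else 0 := by
      intro a
      by_cases h : a = a₁
      · subst h; simp
      · simp [h]
    rw [Finset.sum_congr rfl fun a _ => this a, Finset.sum_ite_eq']
    simp
  rw [h1, h1]

lemma sum_sigA (F : G.A → ℚ) : (∑ a, F (G.sigA a)) = ∑ a, F a :=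
  Fintype.sum_bijective G.sigA G.sigA_invol.bijective _ _ (fun _ => rfl)

lemma div_comp_sigA (u : G.A → ℚ) (y : N) :
    G.div (fun a => u (G.sigA a)) y = - G.div u (G.sigV y) := by
  classical
  unfold div
  have key : ∀ (t h : G.A → N), (∀ a, t (G.sigA a) = G.sigV (h a)) →
      (∑ a, if t a = y then u (G.sigA a) else 0)
        = ∑ a, if h a = G.sigV y then u a else 0 := by
    intro t h hth
    have := sum_sigA G (fun a => if t a = y then u (G.sigA a) else 0)
    rw [← this]
    refine Finset.sum_congr rfl fun a _ => ?_
    rw [hth, G.sigA_invol a]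
    have : (G.sigV (h a) = y) ↔ (h a = G.sigV y) := by
      constructor
      · intro hh; rw [← hh, G.sigV_invol]
      · intro hh; rw [hh, G.sigV_invol]
    simp only [this]
  rw [key G.tail G.head G.tail_sigA, key G.head G.tail G.head_sigA]
  ring

lemma div_symm_sigV (u : G.A → ℚ) (hu : ∀ a, u (G.sigA a) = u a) (y : N) :
    G.div u (G.sigV y) = - G.div u y := by
  have h := G.div_comp_sigA u y
  have h2 : G.div (fun a => u (G.sigA a)) y = G.div u y := by
    have : (fun a => u (G.sigA a)) = u := funext hu
    rw [this]
  rw [h2] at h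
  linarith

lemma div_walk : ∀ (L : List G.A) (u v : N), G.IsDiWalk u v L → L.Nodup → ∀ y : N,
    G.div (fun a => if a ∈ L then (1 : ℚ) else 0) y
      = (if u = y then 1 else 0) - (if v = y then 1 else 0) := by
  intro L
  induction L with
  | nil => intro u v hw; exact absurd rfl hw.1
  | cons a L' ih =>
    intro u v hw hnd y
    obtain ⟨-, hhead, hlast, hchain⟩ := hw
    have hu : G.tail a = u := hhead a rfl
    cases L' with
    | nil =>
      have hv : G.head a = v := hlast a rfl
      have hrw : (fun x => if x ∈ [a] then (1:ℚ) else 0)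
          = fun x => if x = a then (1:ℚ) else 0 := by
        funext x; simp [List.mem_singleton]
      rw [hrw, G.div_single, hu, hv]
    | cons b L'' =>
      have hna : a ∉ b :: L'' := (List.nodup_cons.mp hnd).1
      have hsplit : (fun x => if x ∈ a :: b :: L'' then (1:ℚ) else 0)
          = fun x => (if x = a then (1:ℚ) else 0) + (if x ∈ b :: L'' then (1:ℚ) else 0) := by
        funext x
        by_cases hx : x = a
        · subst hx; simp [hna]
        · by_cases hx2 : x ∈ b :: L'' <;> simp [hx, hx2]
      rw [hsplit, G.div_add, G.div_single, hu]
      have hab : G.head a = G.tail b := (List.isChain_cons_cons.mp hchain).1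
      have hw' : G.IsDiWalk (G.tail b) v (b :: L'') := by
        refine ⟨List.cons_ne_nil _ _, ?_, ?_, (List.isChain_cons_cons.mp hchain).2⟩
        · intro x hx
          simp only [List.head?_cons, Option.mem_some_iff] at hx
          subst hx; rfl
        · simpa [List.getLast?_cons_cons] using hlast
      rw [ih (G.tail b) v hw' (List.nodup_cons.mp hnd).2 y, hab]
      ring

end SkewGraph
namespace SkewGraph

variable {N : Type} (G : SkewGraph N)

lemma sum_subtype_dite {p : G.A → Prop} [DecidablePred p] (F : {b : G.A // p b} → ℚ) :
    (∑ a : {b : G.A // p b}, F a) = ∑ b : G.A, (if hb : p b then F ⟨b, hb⟩ else 0) := by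
  classical
  have h := Finset.sum_subtype (M := ℚ) (p := p) (F := inferInstance) (Finset.univ.filter p)
      (fun x => by simp) (fun b => if hb : p b then F ⟨b, hb⟩ else 0)
  rw [Finset.sum_filter] at h
  have h2 : (∑ b : G.A, if p b then (if hb : p b then F ⟨b, hb⟩ else 0) else 0)
      = ∑ b : G.A, (if hb : p b then F ⟨b, hb⟩ else 0) := by
    refine Finset.sum_congr rfl fun b _ => ?_
    by_cases hb : p b <;> simp [hb]
  rw [h2] at h
  rw [h]
  exact Finset.sum_congr rfl fun a _ =>
    ((dif_pos a.2 : (if hb : p ↑a then F ⟨↑a, hb⟩ else 0) = F a)).symm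

variable (c : G.A → ℕ) (w : G.A → ℚ) (hc : ∀ a, c (G.sigA a) = c a)
  (hw : ∀ a, w (G.sigA a) = w a)

lemma residual_tail_inl (a : {a : G.A // w a < (c a : ℚ)}) :
    (G.residual c w hc hw).tail (Sum.inl a) = G.tail a.1 := rfl
lemma residual_tail_inr (a : {a : G.A // 0 < w a}) :
    (G.residual c w hc hw).tail (Sum.inr a) = G.head a.1 := rfl
lemma residual_head_inl (a : {a : G.A // w a < (c a : ℚ)}) :
    (G.residual c w hc hw).head (Sum.inl a) = G.head a.1 := rfl
lemma residual_head_inr (a : {a : G.A // 0 < w a}) :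
    (G.residual c w hc hw).head (Sum.inr a) = G.tail a.1 := rfl

/-- Push a function on residual arcs down to a signed function on `G`'s arcs. -/
noncomputable def push (A : (G.residual c w hc hw).A → ℚ) : G.A → ℚ := fun b =>
  (if hb : w b < (c b : ℚ) then A (Sum.inl ⟨b, hb⟩) else 0)
  - (if hb : 0 < w b then A (Sum.inr ⟨b, hb⟩) else 0)

lemma div_push (A : (G.residual c w hc hw).A → ℚ) (y : N) :
    G.div (G.push c w hc hw A) y = (G.residual c w hc hw).div A y := by
  classical
  unfold div push
  have inst : ∀ (F : ({a : G.A // w a < (c a : ℚ)} ⊕ {a : G.A // 0 < w a}) → ℚ),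
      (∑ a : (G.residual c w hc hw).A, F a)
        = ∑ a : {a : G.A // w a < (c a : ℚ)} ⊕ {a : G.A // 0 < w a}, F a := by
    intro F
    refine Finset.sum_congr ?_ fun _ _ => rfl
    try congr 1
    try exact Subsingleton.elim _ _
  rw [inst (fun a => if (G.residual c w hc hw).tail a = y then A a else 0),
      inst (fun a => if (G.residual c w hc hw).head a = y then A a else 0),
      Fintype.sum_sum_type, Fintype.sum_sum_type]
  simp only [residual_tail_inl, residual_tail_inr, residual_head_inl, residual_head_inr]
  erw [G.sum_subtype_dite (fun a : {b : G.A // w b < (c b : ℚ)} =>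
        if G.tail a.1 = y then A (Sum.inl a) else 0),
      G.sum_subtype_dite (fun a : {b : G.A // 0 < w b} =>
        if G.head a.1 = y then A (Sum.inr a) else 0),
      G.sum_subtype_dite (fun a : {b : G.A // w b < (c b : ℚ)} =>
        if G.head a.1 = y then A (Sum.inl a) else 0),
      G.sum_subtype_dite (fun a : {b : G.A // 0 < w b} =>
        if G.tail a.1 = y then A (Sum.inr a) else 0)]
  have e1 : ∀ (t : G.A → N),
      (∑ b, if t b = y then ((if hb : w b < (c b : ℚ) then A (Sum.inl ⟨b, hb⟩) else 0)
          - (if hb : 0 < w b then A (Sum.inr ⟨b, hb⟩) else 0)) else 0)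
        = (∑ b, if hb : w b < (c b : ℚ) then (if t b = y then A (Sum.inl ⟨b, hb⟩) else 0) else 0)
          - (∑ b, if hb : 0 < w b then (if t b = y then A (Sum.inr ⟨b, hb⟩) else 0) else 0) := by
    intro t
    rw [← Finset.sum_sub_distrib]
    refine Finset.sum_congr rfl fun b _ => ?_
    by_cases h1 : t b = y <;> by_cases h2 : w b < (c b : ℚ) <;> by_cases h3 : 0 < w b <;>
      simp [h1, h2, h3]
  rw [e1 G.tail, e1 G.head]
  try ring

lemma resCap_sigA (a : (G.residual c w hc hw).A) :
    G.resCap c w hc hw ((G.residual c w hc hw).sigA a) = G.resCap c w hc hw a := by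
  rcases a with a | a
  · show (c (G.sigA a.1) : ℚ) - w (G.sigA a.1) = (c a.1 : ℚ) - w a.1
    rw [hc, hw]
  · show w (G.sigA a.1) = w a.1
    exact hw a.1

lemma resCap_one_le (hint : ∀ b : G.A, ∃ z : ℤ, w b = z)
    (a : (G.residual c w hc hw).A) : 1 ≤ G.resCap c w hc hw a := by
  rcases a with b | b
  · obtain ⟨z, hz⟩ := hint b.1
    have hlt : w b.1 < (c b.1 : ℚ) := b.2
    show (1:ℚ) ≤ (c b.1 : ℚ) - w b.1
    rw [hz] at hlt ⊢
    have h1 : z < ((c b.1 : ℕ) : ℤ) := by exact_mod_cast hlt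
    have h2 : ((z : ℚ)) + 1 ≤ ((c b.1 : ℕ) : ℚ) := by exact_mod_cast h1
    linarith
  · obtain ⟨z, hz⟩ := hint b.1
    have hpos : 0 < w b.1 := b.2
    show (1:ℚ) ≤ w b.1
    rw [hz] at hpos ⊢
    have h1 : 0 < z := by exact_mod_cast hpos
    have h2 : 1 ≤ z := h1
    exact_mod_cast h2

lemma push_comp_sigA (A : (G.residual c w hc hw).A → ℚ)
    (hA : ∀ a, A ((G.residual c w hc hw).sigA a) = A a) (b : G.A) :
    G.push c w hc hw A (G.sigA b) = G.push c w hc hw A b := by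
  unfold push
  have e1 : (if hb : w (G.sigA b) < (c (G.sigA b) : ℚ) then A (Sum.inl ⟨G.sigA b, hb⟩) else 0)
      = (if hb : w b < (c b : ℚ) then A (Sum.inl ⟨b, hb⟩) else 0) := by
    by_cases h1 : w b < (c b : ℚ)
    · have h1' : w (G.sigA b) < (c (G.sigA b) : ℚ) := by rw [hw, hc]; exact h1
      rw [dif_pos h1', dif_pos h1]
      exact hA (Sum.inl ⟨b, h1⟩)
    · have h1' : ¬(w (G.sigA b) < (c (G.sigA b) : ℚ)) := by rw [hw, hc]; exact h1
      rw [dif_neg h1', dif_neg h1]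
  have e2 : (if hb : 0 < w (G.sigA b) then A (Sum.inr ⟨G.sigA b, hb⟩) else 0)
      = (if hb : 0 < w b then A (Sum.inr ⟨b, hb⟩) else 0) := by
    by_cases h2 : 0 < w b
    · have h2' : 0 < w (G.sigA b) := by rw [hw]; exact h2
      rw [dif_pos h2', dif_pos h2]
      exact hA (Sum.inr ⟨b, h2⟩)
    · have h2' : ¬(0 < w (G.sigA b)) := by rw [hw]; exact h2
      rw [dif_neg h2', dif_neg h2]
  rw [e1, e2]

lemma push_int (A : (G.residual c w hc hw).A → ℚ) (hA : ∀ a, ∃ z : ℤ, A a = z) (b : G.A) :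
    ∃ z : ℤ, G.push c w hc hw A b = z := by
  unfold push
  by_cases h1 : w b < (c b : ℚ) <;> by_cases h2 : 0 < w b
  · obtain ⟨z1, e1⟩ := hA (Sum.inl ⟨b, h1⟩)
    obtain ⟨z2, e2⟩ := hA (Sum.inr ⟨b, h2⟩)
    exact ⟨z1 - z2, by rw [dif_pos h1, dif_pos h2, e1, e2]; push_cast; ring⟩
  · obtain ⟨z1, e1⟩ := hA (Sum.inl ⟨b, h1⟩)
    exact ⟨z1, by rw [dif_pos h1, dif_neg h2, e1]; ring⟩
  · obtain ⟨z2, e2⟩ := hA (Sum.inr ⟨b, h2⟩)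
    exact ⟨-z2, by rw [dif_neg h1, dif_pos h2, e2]; push_cast; ring⟩
  · exact ⟨0, by rw [dif_neg h1, dif_neg h2]; norm_num⟩

open Classical in
lemma cnt_le_resCap (hint : ∀ b : G.A, ∃ z : ℤ, w b = z)
    {L : List (G.residual c w hc hw).A}
    (hpair : ∀ a ∈ L, (G.residual c w hc hw).sigA a ∈ L →
      G.resCap c w hc hw a = G.resCap c w hc hw ((G.residual c w hc hw).sigA a)
        ∧ 2 ≤ G.resCap c w hc hw a) (a : (G.residual c w hc hw).A) :
    ((if a ∈ L then (1:ℚ) else 0) + (if (G.residual c w hc hw).sigA a ∈ L then 1 else 0))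
      ≤ G.resCap c w hc hw a := by
  have hone := G.resCap_one_le c w hc hw hint a
  by_cases h1 : a ∈ L <;> by_cases h2 : (G.residual c w hc hw).sigA a ∈ L
  · have := (hpair a h1 h2).2
    rw [if_pos h1, if_pos h2]; linarith
  · rw [if_pos h1, if_neg h2]; linarith
  · rw [if_neg h1, if_pos h2]; linarith
  · rw [if_neg h1, if_neg h2]; linarith

lemma toNat_floor_cast {q : ℚ} (hq : ∃ z : ℤ, q = z) : ((⌊q⌋.toNat : ℕ) : ℚ) = max q 0 := by
  obtain ⟨z, rfl⟩ := hq
  rw [Int.floor_intCast]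
  have h1 : ((z.toNat : ℤ) : ℚ) = ((max z 0 : ℤ) : ℚ) := by rw [Int.toNat_eq_max]
  push_cast at h1
  convert h1 using 2 <;> norm_num

lemma push_bound_le (A : (G.residual c w hc hw).A → ℚ)
    (hAnn : ∀ a, 0 ≤ A a) (hAcap : ∀ a, A a ≤ G.resCap c w hc hw a)
    (hfeas : ∀ b, w b ≤ (c b : ℚ)) (b : G.A) :
    w b + G.push c w hc hw A b ≤ (c b : ℚ) := by
  unfold push
  have h2 : (0:ℚ) ≤ (if hb : 0 < w b then A (Sum.inr ⟨b, hb⟩) else 0) := by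
    by_cases h3 : 0 < w b
    · rw [dif_pos h3]; exact hAnn _
    · rw [dif_neg h3]
  by_cases h1 : w b < (c b : ℚ)
  · rw [dif_pos h1]
    have h3 : A (Sum.inl ⟨b, h1⟩) ≤ (c b : ℚ) - w b := hAcap (Sum.inl ⟨b, h1⟩)
    linarith
  · rw [dif_neg h1]
    have := hfeas b
    linarith

lemma push_bound_nonneg (A : (G.residual c w hc hw).A → ℚ)
    (hAnn : ∀ a, 0 ≤ A a) (hAcap : ∀ a, A a ≤ G.resCap c w hc hw a)
    (h0 : ∀ b, 0 ≤ w b) (b : G.A) :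
    0 ≤ w b + G.push c w hc hw A b := by
  unfold push
  have h2 : (0:ℚ) ≤ (if hb : w b < (c b : ℚ) then A (Sum.inl ⟨b, hb⟩) else 0) := by
    by_cases h3 : w b < (c b : ℚ)
    · rw [dif_pos h3]; exact hAnn _
    · rw [dif_neg h3]
  by_cases h1 : 0 < w b
  · rw [dif_pos h1]
    have h3 : A (Sum.inr ⟨b, h1⟩) ≤ w b := hAcap (Sum.inr ⟨b, h1⟩)
    linarith
  · rw [dif_neg h1]
    have := h0 b
    linarith

open Classical in
/-- Key extraction lemma: from a symmetric nonnegative integer "flow" `h` on a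
skew-symmetric graph whose divergence is `δ_p + δ_{σv} - δ_v - δ_{σp}`, one can
extract either an arc-simple trail from `p` to `v` whose "demand"
`[a ∈ L] + [σa ∈ L]` is bounded by `h`, or a symmetric subflow of `h` with
divergence exactly `δ_p - δ_{σp}`. -/
lemma extract (Gp : SkewGraph N) : ∀ (n : ℕ) (h : Gp.A → ℕ), (∑ a, h a) = n →
    (∀ a, h (Gp.sigA a) = h a) → ∀ (p v : N),
    (∀ y, Gp.div (fun a => (h a : ℚ)) y
      = (if p = y then 1 else 0) + (if Gp.sigV v = y then 1 else 0)
        - (if v = y then 1 else 0) - (if Gp.sigV p = y then 1 else 0)) →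
    p = v ∨
    (∃ L : List Gp.A, Gp.IsDiWalk p v L ∧ L.Nodup ∧
      ∀ a, ((if a ∈ L then 1 else 0) + (if Gp.sigA a ∈ L then 1 else 0) : ℕ) ≤ h a) ∨
    (∃ H : Gp.A → ℕ, (∀ a, H a ≤ h a) ∧ (∀ a, H (Gp.sigA a) = H a) ∧
      ∀ y, Gp.div (fun a => (H a : ℚ)) y
        = (if p = y then 1 else 0) - (if Gp.sigV p = y then 1 else 0)) := by
  intro n
  induction n using Nat.strong_induction_on with
  | _ n IH =>
    intro h hsum hhsym p v hdiv
    by_cases hpv : p = v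
    · exact Or.inl hpv
    right
    -- there is an arc `a₁` leaving `p` with positive `h`
    obtain ⟨a₁, hta₁, hha₁⟩ : ∃ a₁, Gp.tail a₁ = p ∧ 1 ≤ h a₁ := by
      by_contra hcon
      push_neg at hcon
      have hout : (∑ a, if Gp.tail a = p then ((h a : ℕ) : ℚ) else 0) = 0 := by
        refine Finset.sum_eq_zero fun a _ => ?_
        by_cases ht : Gp.tail a = p
        · have := hcon a ht
          have hz : h a = 0 := by omega
          simp [ht, hz]
        · simp [ht]
      have hin : (0:ℚ) ≤ ∑ a, if Gp.head a = p then ((h a : ℕ) : ℚ) else 0 := by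
        refine Finset.sum_nonneg fun a _ => ?_
        split <;> positivity
      have hdp := hdiv p
      unfold div at hdp
      rw [hout] at hdp
      rw [if_pos rfl, if_neg (fun hh : v = p => hpv hh.symm),
        if_neg (Gp.sigV_ne p)] at hdp
      have : (0:ℚ) ≤ (if Gp.sigV v = p then (1:ℚ) else 0) := by split <;> norm_num
      linarith
    by_cases hself : Gp.sigA a₁ = a₁
    · -- self-symmetric first arc gives a unit subflow from p to σp
      right
      have hiff : ∀ a, (Gp.sigA a = a₁) ↔ (a = a₁) := by
        intro a
        constructor
        · intro hh; rw [← Gp.sigA_invol a, hh, hself]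
        · intro hh; rw [hh, hself]
      have hha : Gp.head a₁ = Gp.sigV p := by
        have h2 := Gp.tail_sigA a₁
        rw [hself, hta₁] at h2
        rw [h2, Gp.sigV_invol]
      refine ⟨fun a => if a = a₁ then 1 else 0, ?_, ?_, ?_⟩
      · intro a
        by_cases ha : a = a₁
        · simpa [ha] using hha₁
        · simp [ha]
      · intro a
        by_cases ha : a = a₁
        · have t1 : Gp.sigA a = a₁ := by rw [ha, hself]
          simp [t1, ha, hself]
        · have t1 : ¬(Gp.sigA a = a₁) := fun hh => ha ((hiff a).mp hh)
          simp [t1, ha]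
      · intro y
        have hrw : (fun a => (((if a = a₁ then 1 else 0 : ℕ)) : ℚ))
            = fun a => if a = a₁ then (1:ℚ) else 0 := by
          funext a; split <;> simp
        rw [hrw, Gp.div_single, hta₁, hha]
    · -- general case: peel off `a₁` and its mate, recurse
      set x := Gp.head a₁ with hx
      have hsa₁ : Gp.tail (Gp.sigA a₁) = Gp.sigV x := by rw [Gp.tail_sigA]
      have hsa₂ : Gp.head (Gp.sigA a₁) = Gp.sigV p := by rw [Gp.head_sigA, hta₁]
      have hiff : ∀ a, (Gp.sigA a = a₁) ↔ (a = Gp.sigA a₁) := by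
        intro a
        constructor
        · intro hh; rw [← hh, Gp.sigA_invol]
        · intro hh; rw [hh, Gp.sigA_invol]
      have hiff2 : ∀ a, (Gp.sigA a = Gp.sigA a₁) ↔ (a = a₁) :=
        fun a => ⟨fun hh => Gp.sigA_invol.injective hh, fun hh => by rw [hh]⟩
      have hne1 : ¬(a₁ = Gp.sigA a₁) := fun hh => hself hh.symm
      set e : Gp.A → ℕ := fun a => (if a = a₁ then 1 else 0) + (if a = Gp.sigA a₁ then 1 else 0)
        with he
      have he_le : ∀ a, e a ≤ h a := by
        intro a
        show (if a = a₁ then 1 else 0) + (if a = Gp.sigA a₁ then 1 else 0) ≤ h a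
        by_cases h1 : a = a₁
        · have : h a = h a₁ := by rw [h1]
          rw [this, if_pos h1, if_neg (by rw [h1]; exact hne1)]
          omega
        · by_cases h2 : a = Gp.sigA a₁
          · have : h a = h a₁ := by rw [h2, hhsym]
            rw [this, if_pos h2, if_neg h1]
            omega
          · simp [h1, h2]
      have hesym : ∀ a, e (Gp.sigA a) = e a := by
        intro a
        show (if Gp.sigA a = a₁ then 1 else 0) + (if Gp.sigA a = Gp.sigA a₁ then 1 else 0)
          = (if a = a₁ then 1 else 0) + (if a = Gp.sigA a₁ then 1 else 0)
        by_cases h1 : a = a₁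
        · rw [if_pos ((hiff2 a).mpr h1), if_neg (fun hh => hne1 (h1 ▸ (hiff a).mp hh)),
            if_pos h1, if_neg (by rw [h1]; exact hne1)]
        · by_cases h2 : a = Gp.sigA a₁
          · rw [if_pos ((hiff a).mpr h2), if_neg (fun hh => h1 ((hiff2 a).mp hh)),
              if_neg h1, if_pos h2]
          · rw [if_neg (fun hh => h2 ((hiff a).mp hh)), if_neg (fun hh => h1 ((hiff2 a).mp hh)),
              if_neg h1, if_neg h2]
      set h' : Gp.A → ℕ := fun a => h a - e a with hh'
      have hcast : (fun a => ((h' a : ℕ) : ℚ))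
          = fun a => ((h a : ℕ) : ℚ) - ((e a : ℕ) : ℚ) := by
        funext a
        show ((h a - e a : ℕ) : ℚ) = _
        rw [Nat.cast_sub (he_le a)]
      have hecast : (fun a => ((e a : ℕ) : ℚ))
          = fun a => (if a = a₁ then (1:ℚ) else 0) + (if a = Gp.sigA a₁ then (1:ℚ) else 0) := by
        funext a
        show (((if a = a₁ then 1 else 0) + (if a = Gp.sigA a₁ then 1 else 0) : ℕ) : ℚ) = _
        by_cases h1 : a = a₁ <;> by_cases h2 : a = Gp.sigA a₁ <;> simp [h1, h2]
      have hdive : ∀ y, Gp.div (fun a => ((e a : ℕ) : ℚ)) y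
          = ((if p = y then 1 else 0) - (if x = y then 1 else 0)
            + (if Gp.sigV x = y then 1 else 0) - (if Gp.sigV p = y then 1 else 0) : ℚ) := by
        intro y
        rw [hecast, Gp.div_add, Gp.div_single, Gp.div_single, hta₁, hsa₁, hsa₂, ← hx]
        ring
      have hdiv' : ∀ y, Gp.div (fun a => ((h' a : ℕ) : ℚ)) y
          = (if x = y then 1 else 0) + (if Gp.sigV v = y then 1 else 0)
            - (if v = y then 1 else 0) - (if Gp.sigV x = y then 1 else 0) := by
        intro y
        rw [hcast, Gp.div_sub, hdiv y, hdive y]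
        ring
      have hea₁ : e a₁ = 1 := by
        show (if a₁ = a₁ then 1 else 0) + (if a₁ = Gp.sigA a₁ then 1 else 0) = 1
        rw [if_pos rfl, if_neg hne1]
      have hsum' : (∑ a, h' a) < n := by
        rw [← hsum]
        refine Finset.sum_lt_sum (fun a _ => Nat.sub_le _ _) ⟨a₁, Finset.mem_univ _, ?_⟩
        show h a₁ - e a₁ < h a₁
        omega
      have h'sym : ∀ a, h' (Gp.sigA a) = h' a := by
        intro a
        show h (Gp.sigA a) - e (Gp.sigA a) = h a - e a
        rw [hhsym, hesym]
      rcases IH _ hsum' h' rfl h'sym x v hdiv' with hxv | ⟨Q, hQw, hQnd, hQd⟩ |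
        ⟨H', hH'le, hH'sym, hH'div⟩
      · -- head of a₁ is already v
        left
        refine ⟨[a₁], ⟨by simp, ?_, ?_, List.isChain_singleton _⟩, List.nodup_singleton a₁, ?_⟩
        · intro b hb
          simp only [List.head?_cons, Option.mem_some_iff] at hb
          subst hb; exact hta₁
        · intro b hb
          have : ([a₁] : List Gp.A).getLast? = some a₁ := rfl
          rw [this] at hb
          simp only [Option.mem_some_iff] at hb
          subst hb; rw [← hxv]
        · intro a
          have hkey : ((if a ∈ [a₁] then 1 else 0) + (if Gp.sigA a ∈ [a₁] then 1 else 0) : ℕ)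
              = e a := by
            simp only [List.mem_singleton]
            show _ = (if a = a₁ then 1 else 0) + (if a = Gp.sigA a₁ then 1 else 0)
            congr 1
            by_cases h2 : a = Gp.sigA a₁
            · rw [if_pos ((hiff a).mpr h2), if_pos h2]
            · rw [if_neg (fun hh => h2 ((hiff a).mp hh)), if_neg h2]
          rw [hkey]; exact he_le a
      · -- got a trail from x to v
        have hQne : Q ≠ [] := hQw.1
        have hQd' : ∀ a, ((if a ∈ Q then 1 else 0) + (if Gp.sigA a ∈ Q then 1 else 0) : ℕ) ≤ h a :=
          fun a => le_trans (hQd a) (Nat.sub_le _ _)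
        by_cases hmem : a₁ ∈ Q
        · obtain ⟨s₁, s₂, rfl⟩ := List.append_of_mem hmem
          left
          have hlast : (s₁ ++ a₁ :: s₂).getLast? = (a₁ :: s₂).getLast? := by
            rw [List.getLast?_append]
            cases hgl : (a₁ :: s₂).getLast? with
            | none =>
              have hgs := List.getLast?_isSome.mpr (List.cons_ne_nil a₁ s₂)
              rw [hgl] at hgs
              simp at hgs
            | some b => rfl
          refine ⟨a₁ :: s₂, ⟨by simp, ?_, ?_, ?_⟩, ?_, ?_⟩
          · intro b hb
            simp only [List.head?_cons, Option.mem_some_iff] at hb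
            subst hb; exact hta₁
          · intro b hb
            exact hQw.2.2.1 b (by rw [hlast]; exact hb)
          · exact (List.isChain_append.mp hQw.2.2.2).2.1
          · exact (List.nodup_append'.mp hQnd).2.1
          · intro a
            refine le_trans ?_ (hQd' a)
            have b1 : ∀ (z : Gp.A), (if z ∈ a₁ :: s₂ then (1:ℕ) else 0)
                ≤ (if z ∈ s₁ ++ a₁ :: s₂ then 1 else 0) := by
              intro z
              by_cases hz : z ∈ a₁ :: s₂
              · rw [if_pos hz, if_pos (List.mem_append_right s₁ hz)]
              · simp [hz]
            exact add_le_add (b1 a) (b1 (Gp.sigA a))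
        · left
          obtain ⟨b₀, hb₀⟩ : ∃ b₀, Q.getLast? = some b₀ := by
            cases hgl : Q.getLast? with
            | none =>
              have hgs := List.getLast?_isSome.mpr hQne
              rw [hgl] at hgs
              simp at hgs
            | some b => exact ⟨b, rfl⟩
          refine ⟨a₁ :: Q, ⟨by simp, ?_, ?_, ?_⟩, List.nodup_cons.mpr ⟨hmem, hQnd⟩, ?_⟩
          · intro b hb
            simp only [List.head?_cons, Option.mem_some_iff] at hb
            subst hb; exact hta₁
          · intro b hb
            have hlast : (a₁ :: Q).getLast? = Q.getLast? := by
              rw [show a₁ :: Q = [a₁] ++ Q from rfl, List.getLast?_append, hb₀]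
              rfl
            exact hQw.2.2.1 b (by rw [← hlast]; exact hb)
          · refine List.isChain_cons.mpr ⟨?_, hQw.2.2.2⟩
            intro b hb
            rw [hQw.2.1 b hb]
          · intro a
            have b1 : (if a ∈ a₁ :: Q then (1:ℕ) else 0)
                ≤ (if a = a₁ then 1 else 0) + (if a ∈ Q then 1 else 0) := by
              by_cases h1 : a = a₁ <;> by_cases h2 : a ∈ Q <;>
                simp [h1, h2, List.mem_cons]
            have b2 : (if Gp.sigA a ∈ a₁ :: Q then (1:ℕ) else 0)
                ≤ (if a = Gp.sigA a₁ then 1 else 0) + (if Gp.sigA a ∈ Q then 1 else 0) := by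
              by_cases h1 : Gp.sigA a = a₁
              · rw [if_pos ((hiff a).mp h1)]
                by_cases h2 : Gp.sigA a ∈ Q <;> simp [h1, h2, List.mem_cons]
              · rw [if_neg (fun hh => h1 ((hiff a).mpr hh))]
                by_cases h2 : Gp.sigA a ∈ Q <;> simp [h1, h2, List.mem_cons]
            have d1 := add_le_add b1 b2
            have d2 := hQd a
            have d3 : e a + h' a = h a := Nat.add_sub_cancel' (he_le a)
            have d4 : e a = (if a = a₁ then 1 else 0) + (if a = Gp.sigA a₁ then 1 else 0) := rfl
            have d5 : h' a = h a - e a := rfl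
            omega
      · -- got a subflow for x; extend it to one for p
        right
        refine ⟨fun a => H' a + e a, ?_, ?_, ?_⟩
        · intro a
          have h1 : H' a ≤ h a - e a := hH'le a
          have h2 := he_le a
          show H' a + e a ≤ h a
          omega
        · intro a
          show H' (Gp.sigA a) + e (Gp.sigA a) = H' a + e a
          rw [hH'sym, hesym]
        · intro y
          have hrw : (fun a => (((H' a + e a : ℕ)) : ℚ))
              = fun a => ((H' a : ℕ) : ℚ) + ((e a : ℕ) : ℚ) := by
            funext a; push_cast; ring
          rw [hrw, Gp.div_add, hH'div y, hdive y]
          ring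

open Classical in
lemma reach_subset {N : Type} (G : SkewGraph N) (s : N) (c : G.A → ℕ)
    (hc : ∀ a, c (G.sigA a) = c a)
    (f g : G.A → ℚ)
    (hflowf : G.IsISKFlow s f) (hfeasf : G.FlowFeasible c f)
    (hsymf : ∀ a, f (G.sigA a) = f a)
    (hflowg : G.IsISKFlow s g) (hfeasg : G.FlowFeasible c g)
    (hsymg : ∀ a, g (G.sigA a) = g a)
    (hvals : G.div f s = G.div g s)
    (hmaxg : ∀ h : G.A → ℚ, G.IsISKFlow s h → G.FlowFeasible c h →
      G.div h s ≤ G.div g s) :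
    G.reachSet s c hc f hsymf ⊆ G.reachSet s c hc g hsymg := by
  intro v hv
  rcases hv with rfl | ⟨P, hPwalk, hPnd, hPpair⟩
  · exact Or.inl rfl
  obtain ⟨hf0, hfint, -, hfcons, hfs⟩ := hflowf
  obtain ⟨hg0, hgint, -, hgcons, hgs⟩ := hflowg
  -- divergences of the two maximum flows agree everywhere
  have hdivfg : ∀ y, G.div f y = G.div g y := by
    intro y
    by_cases hy1 : y = s
    · rw [hy1]; exact hvals
    by_cases hy2 : y = G.sigV s
    · rw [hy2, G.div_symm_sigV f hsymf, G.div_symm_sigV g hsymg, hvals]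
    · rw [hfcons y hy1 hy2, hgcons y hy1 hy2]
  -- the modified flow f' = f + P + σP
  set mP : (G.residual c f hc hsymf).A → ℚ :=
    fun a => (if a ∈ P then (1:ℚ) else 0) + (if (G.residual c f hc hsymf).sigA a ∈ P then 1 else 0) with hmP
  have hmPsym : ∀ a, mP ((G.residual c f hc hsymf).sigA a) = mP a := by
    intro a
    show (if (G.residual c f hc hsymf).sigA a ∈ P then (1:ℚ) else 0) + (if (G.residual c f hc hsymf).sigA ((G.residual c f hc hsymf).sigA a) ∈ P then 1 else 0)
      = (if a ∈ P then (1:ℚ) else 0) + (if (G.residual c f hc hsymf).sigA a ∈ P then 1 else 0)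
    rw [(G.residual c f hc hsymf).sigA_invol a, add_comm]
  have hmPcap : ∀ a, mP a ≤ G.resCap c f hc hsymf a :=
    G.cnt_le_resCap c f hc hsymf hfint hPpair
  have hmPnonneg : ∀ a, 0 ≤ mP a := by
    intro a
    show 0 ≤ (if a ∈ P then (1:ℚ) else 0) + (if (G.residual c f hc hsymf).sigA a ∈ P then 1 else 0)
    have : ∀ (q : Prop) [Decidable q], (0:ℚ) ≤ if q then 1 else 0 := by
      intro q _; split <;> norm_num
    have h1 := this (a ∈ P)
    have h2 := this ((G.residual c f hc hsymf).sigA a ∈ P)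
    linarith
  have hmPint : ∀ a, ∃ z : ℤ, mP a = z := by
    intro a
    show ∃ z : ℤ, (if a ∈ P then (1:ℚ) else 0) + (if (G.residual c f hc hsymf).sigA a ∈ P then 1 else 0) = z
    by_cases h1 : a ∈ P <;> by_cases h2 : (G.residual c f hc hsymf).sigA a ∈ P
    · exact ⟨2, by rw [if_pos h1, if_pos h2]; norm_num⟩
    · exact ⟨1, by rw [if_pos h1, if_neg h2]; norm_num⟩
    · exact ⟨1, by rw [if_neg h1, if_pos h2]; norm_num⟩
    · exact ⟨0, by rw [if_neg h1, if_neg h2]; norm_num⟩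
  set f' : G.A → ℚ := fun b => f b + G.push c f hc hsymf mP b with hf'
  have hf'le : ∀ b, f' b ≤ (c b : ℚ) :=
    G.push_bound_le c f hc hsymf mP hmPnonneg hmPcap hfeasf
  have hf'nonneg : ∀ b, 0 ≤ f' b :=
    G.push_bound_nonneg c f hc hsymf mP hmPnonneg hmPcap hf0
  have hf'int : ∀ b, ∃ z : ℤ, f' b = z := by
    intro b
    obtain ⟨z1, e1⟩ := hfint b
    obtain ⟨z2, e2⟩ := G.push_int c f hc hsymf mP hmPint b
    exact ⟨z1 + z2, by show f b + _ = _; rw [e1, e2]; push_cast; ring⟩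
  have hf'sym : ∀ b, f' (G.sigA b) = f' b := by
    intro b
    show f (G.sigA b) + G.push c f hc hsymf mP (G.sigA b) = f b + G.push c f hc hsymf mP b
    rw [hsymf, G.push_comp_sigA c f hc hsymf mP hmPsym]
  -- divergence of f'
  have hitesw : ∀ (u y : N), (if u = G.sigV y then (1:ℚ) else 0)
      = (if G.sigV u = y then 1 else 0) := by
    intro u y
    by_cases h : u = G.sigV y
    · rw [if_pos h, if_pos (by rw [h, G.sigV_invol])]
    · rw [if_neg h, if_neg (fun hh => h (by rw [← hh, G.sigV_invol]))]
  have hf'div : ∀ y, G.div f' y = G.div f y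
      + ((if s = y then 1 else 0) - (if v = y then 1 else 0)
        + (if G.sigV v = y then 1 else 0) - (if G.sigV s = y then 1 else 0)) := by
    intro y
    have hstep : G.div f' y = G.div f y + G.div (G.push c f hc hsymf mP) y :=
      G.div_add f (G.push c f hc hsymf mP) y
    rw [hstep, G.div_push]
    have hsplit : (G.residual c f hc hsymf).div mP y
        = (G.residual c f hc hsymf).div (fun a => if a ∈ P then (1:ℚ) else 0) y
          + (G.residual c f hc hsymf).div
            (fun a => if (G.residual c f hc hsymf).sigA a ∈ P then (1:ℚ) else 0) y :=
      (G.residual c f hc hsymf).div_add _ _ y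
    rw [hsplit]
    have hcomp := (G.residual c f hc hsymf).div_comp_sigA
      (fun a => if a ∈ P then (1:ℚ) else 0) y
    rw [hcomp, (G.residual c f hc hsymf).div_walk P s v hPwalk hPnd y,
      (G.residual c f hc hsymf).div_walk P s v hPwalk hPnd
        ((G.residual c f hc hsymf).sigV y)]
    have hsv : (G.residual c f hc hsymf).sigV = G.sigV := rfl
    rw [hsv, hitesw s y, hitesw v y]
    ring
  -- the difference flow on the residual graph of g
  set h : (G.residual c g hc hsymg).A → ℕ := Sum.elim (fun b => (⌊f' b.1 - g b.1⌋).toNat)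
    (fun b => (⌊g b.1 - f' b.1⌋).toNat) with hh
  have hdiffint : ∀ b, ∃ z : ℤ, f' b - g b = z := by
    intro b
    obtain ⟨z1, e1⟩ := hf'int b
    obtain ⟨z2, e2⟩ := hgint b
    exact ⟨z1 - z2, by rw [e1, e2]; push_cast; ring⟩
  have hdiffint' : ∀ b, ∃ z : ℤ, g b - f' b = z := by
    intro b
    obtain ⟨z, e⟩ := hdiffint b
    exact ⟨-z, by push_cast; linarith⟩
  have hcast1 : ∀ b : {a : G.A // g a < (c a : ℚ)},
      ((h (Sum.inl b) : ℕ) : ℚ) = max (f' b.1 - g b.1) 0 :=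
    fun b => toNat_floor_cast (hdiffint b.1)
  have hcast2 : ∀ b : {a : G.A // 0 < g a},
      ((h (Sum.inr b) : ℕ) : ℚ) = max (g b.1 - f' b.1) 0 :=
    fun b => toNat_floor_cast (hdiffint' b.1)
  have hhle : ∀ a, ((h a : ℕ) : ℚ) ≤ G.resCap c g hc hsymg a := by
    intro a
    rcases a with b | b
    · rw [hcast1 b]
      show max (f' b.1 - g b.1) 0 ≤ (c b.1 : ℚ) - g b.1
      have h1 := hf'le b.1
      have h2 : g b.1 ≤ (c b.1 : ℚ) := le_of_lt b.2
      exact max_le (by linarith) (by linarith)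
    · rw [hcast2 b]
      show max (g b.1 - f' b.1) 0 ≤ g b.1
      have h1 := hf'nonneg b.1
      have h2 : (0:ℚ) < g b.1 := b.2
      exact max_le (by linarith) (by linarith)
  have hhsym : ∀ a, h ((G.residual c g hc hsymg).sigA a) = h a := by
    intro a
    rcases a with b | b
    · show (⌊f' (G.sigA b.1) - g (G.sigA b.1)⌋).toNat = (⌊f' b.1 - g b.1⌋).toNat
      rw [hf'sym, hsymg]
    · show (⌊g (G.sigA b.1) - f' (G.sigA b.1)⌋).toNat = (⌊g b.1 - f' b.1⌋).toNat
      rw [hf'sym, hsymg]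
  have hpushh : G.push c g hc hsymg (fun a => ((h a : ℕ) : ℚ)) = fun b => f' b - g b := by
    funext b
    unfold push
    simp only []
    by_cases h1 : g b < (c b : ℚ) <;> by_cases h2 : 0 < g b
    · rw [dif_pos h1, dif_pos h2, hcast1 ⟨b, h1⟩, hcast2 ⟨b, h2⟩]
      rcases le_total (f' b) (g b) with hle | hle
      · rw [max_eq_right (by linarith : f' b - g b ≤ 0),
          max_eq_left (by linarith : (0:ℚ) ≤ g b - f' b)]
        ring
      · rw [max_eq_left (by linarith : (0:ℚ) ≤ f' b - g b),
          max_eq_right (by linarith : g b - f' b ≤ 0)]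
        ring
    · rw [dif_pos h1, dif_neg h2, hcast1 ⟨b, h1⟩]
      have hgz : g b = 0 := le_antisymm (not_lt.mp h2) (hg0 b)
      rw [max_eq_left (by linarith [hf'nonneg b, hgz.ge, hgz.le] : (0:ℚ) ≤ f' b - g b)]
      ring
    · rw [dif_neg h1, dif_pos h2, hcast2 ⟨b, h2⟩]
      have hgc : g b = (c b : ℚ) := le_antisymm (hfeasg b) (not_lt.mp h1)
      have h3 : f' b ≤ g b := by rw [hgc]; exact hf'le b
      rw [max_eq_left (by linarith : (0:ℚ) ≤ g b - f' b)]
      ring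
    · rw [dif_neg h1, dif_neg h2]
      have hgz : g b = 0 := le_antisymm (not_lt.mp h2) (hg0 b)
      have hcz : (c b : ℚ) ≤ 0 := by rw [← hgz]; exact not_lt.mp h1
      have h3 := hf'le b
      have h4 := hf'nonneg b
      have h5 : f' b = 0 := le_antisymm (by linarith) h4
      rw [h5, hgz]
      try ring
  have hdivh : ∀ y, (G.residual c g hc hsymg).div (fun a => ((h a : ℕ) : ℚ)) y
      = (if s = y then 1 else 0) + (if (G.residual c g hc hsymg).sigV v = y then 1 else 0)
        - (if v = y then 1 else 0) - (if (G.residual c g hc hsymg).sigV s = y then 1 else 0) := by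
    intro y
    have hstep := G.div_push c g hc hsymg (fun a => ((h a : ℕ) : ℚ)) y
    rw [← hstep, hpushh, G.div_sub f' g y, hf'div y, hdivfg y]
    have hsv : (G.residual c g hc hsymg).sigV = G.sigV := rfl
    rw [hsv]
    ring
  -- apply the extraction lemma
  rcases extract (G.residual c g hc hsymg) (∑ a, h a) h rfl hhsym s v hdivh with hsv | ⟨L, hLw, hLnd, hLd⟩ |
    ⟨H, hHle, hHsym, hHdiv⟩
  · exact Or.inl hsv.symm
  · -- regular path for g
    refine Or.inr ⟨L, hLw, hLnd, fun a ha hsa => ?_⟩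
    constructor
    · exact (G.resCap_sigA c g hc hsymg a).symm
    · have hd := hLd a
      rw [if_pos ha, if_pos hsa] at hd
      have : ((2 : ℕ) : ℚ) ≤ ((h a : ℕ) : ℚ) := by exact_mod_cast hd
      have := le_trans this (hhle a)
      exact_mod_cast this
  · -- augmenting subflow: contradicts maximality of g
    exfalso
    set g' : G.A → ℚ := fun b => g b + G.push c g hc hsymg (fun a => ((H a : ℕ) : ℚ)) b
      with hg'
    have hHnonneg : ∀ a, (0:ℚ) ≤ ((H a : ℕ) : ℚ) := fun a => by positivity
    have hHcap : ∀ a, ((H a : ℕ) : ℚ) ≤ G.resCap c g hc hsymg a := by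
      intro a
      refine le_trans ?_ (hhle a)
      exact_mod_cast hHle a
    have hHsymQ : ∀ a, ((H ((G.residual c g hc hsymg).sigA a) : ℕ) : ℚ) = ((H a : ℕ) : ℚ) :=
      fun a => by rw [hHsym]
    have hg'le : ∀ b, g' b ≤ (c b : ℚ) :=
      G.push_bound_le c g hc hsymg _ hHnonneg hHcap hfeasg
    have hg'nonneg : ∀ b, 0 ≤ g' b :=
      G.push_bound_nonneg c g hc hsymg _ hHnonneg hHcap hg0
    have hg'int : ∀ b, ∃ z : ℤ, g' b = z := by
      intro b
      obtain ⟨z1, e1⟩ := hgint b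
      obtain ⟨z2, e2⟩ := G.push_int c g hc hsymg (fun a => ((H a : ℕ) : ℚ))
        (fun a => ⟨H a, by norm_num⟩) b
      exact ⟨z1 + z2, by show g b + _ = _; rw [e1, e2]; push_cast; ring⟩
    have hg'sym : ∀ b, g' (G.sigA b) = g' b := by
      intro b
      show g (G.sigA b) + _ = g b + _
      rw [hsymg, G.push_comp_sigA c g hc hsymg _ hHsymQ]
    have hg'div : ∀ y, G.div g' y = G.div g y
        + ((if s = y then 1 else 0) - (if G.sigV s = y then 1 else 0)) := by
      intro y
      have hstep : G.div g' y = G.div g y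
          + G.div (G.push c g hc hsymg (fun a => ((H a : ℕ) : ℚ))) y :=
        G.div_add g _ y
      rw [hstep, G.div_push, hHdiv y]
      have hsv : (G.residual c g hc hsymg).sigV = G.sigV := rfl
      rw [hsv]
    have hflow' : G.IsISKFlow s g' := by
      refine ⟨hg'nonneg, hg'int, hg'sym, ?_, ?_⟩
      · intro y hy1 hy2
        rw [hg'div y, hgcons y hy1 hy2,
          if_neg (fun hh : s = y => hy1 hh.symm),
          if_neg (fun hh : G.sigV s = y => hy2 hh.symm)]
        ring
      · rw [hg'div s, if_pos rfl, if_neg (G.sigV_ne s)]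
        linarith [hgs]
    have hcontr := hmaxg g' hflow' hg'le
    rw [hg'div s, if_pos rfl, if_neg (G.sigV_ne s)] at hcontr
    linarith

end SkewGraph

/-- the set of nodes reachable from `s` by `c_f`-regular paths
in the residual graph is the same for all maximum integer skew-symmetric
flows `f`. -/
theorem reachSet_independent_of_maximum_flow
    {N : Type} (G : SkewGraph N) (s : N) (c : G.A → ℕ)
    (hc : ∀ a, c (G.sigA a) = c a)
    (f g : G.A → ℚ)
    (hflowf : G.IsISKFlow s f) (hfeasf : G.FlowFeasible c f)
    (hsymf : ∀ a, f (G.sigA a) = f a)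
    (hmaxf : ∀ h : G.A → ℚ, G.IsISKFlow s h → G.FlowFeasible c h →
      G.div h s ≤ G.div f s)
    (hflowg : G.IsISKFlow s g) (hfeasg : G.FlowFeasible c g)
    (hsymg : ∀ a, g (G.sigA a) = g a)
    (hmaxg : ∀ h : G.A → ℚ, G.IsISKFlow s h → G.FlowFeasible c h →
      G.div h s ≤ G.div g s) :
    G.reachSet s c hc f hsymf = G.reachSet s c hc g hsymg := by
  apply Set.Subset.antisymm
  · exact G.reach_subset s c hc f g hflowf hfeasf hsymf hflowg hfeasg hsymg
      (le_antisymm (hmaxg f hflowf hfeasf) (hmaxf g hflowg hfeasg)) hmaxg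
  · exact G.reach_subset s c hc g f hflowg hfeasg hsymg hflowf hfeasf hsymf
      (le_antisymm (hmaxf g hflowg hfeasg) (hmaxg f hflowf hfeasf)) hmaxf
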